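/- A vector x ∈ ℝⁿ is an AE solution to the interval system of equations Ax = b (i.e., for all A∀ ∈ A∀ and b∀ ∈ b∀ there exist A∃ ∈ A∃ and b∃ ∈ b∃ such that (A∀ + A∃)x = b∀ + b∃) if and only if |A_c x − b_c| ≤ (A∃_Δ − A∀_Δ)|x| + b∃_Δ − b∀_Δ, where the inequality and absolute value are meant entrywise. -/

import Mathlib

open Matrix Finset

private noncomputable def sg (y : ℝ) : ℝ := if 0 ≤ y then 1 else -1

private lemma sg_mul (y : ℝ) : sg y * y = |y| := by
  unfold sg; split
  · rw [one_mul, abs_of_nonneg ‹_›]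
  · rw [neg_one_mul, abs_of_neg (not_le.mp ‹_›)]

private lemma abs_sg (y : ℝ) : |sg y| = 1 := by
  unfold sg; split <;> simp

private lemma abs_add_sg_mul (v t : ℝ) (ht : 0 ≤ t) : |v + sg v * t| = |v| + t := by
  unfold sg; split
  · rw [one_mul, abs_of_nonneg (by linarith), abs_of_nonneg ‹_›]
  · have hv : v < 0 := not_le.mp ‹_›
    rw [neg_one_mul, abs_of_nonpos (by linarith), abs_of_neg hv]; ring

private lemma abs_dev_sum_le {n : ℕ} (a c d x : Fin n → ℝ) (h : ∀ j, |a j - c j| ≤ d j) :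
    |∑ j, a j * x j - ∑ j, c j * x j| ≤ ∑ j, d j * |x j| := by
  rw [← Finset.sum_sub_distrib]
  calc |∑ j, (a j * x j - c j * x j)| ≤ ∑ j, |a j * x j - c j * x j| :=
        Finset.abs_sum_le_sum_abs _ _
    _ ≤ ∑ j, d j * |x j| := Finset.sum_le_sum fun j _ => by
        rw [← sub_mul, abs_mul]
        exact mul_le_mul_of_nonneg_right (h j) (abs_nonneg _)

/-- AE solutions to interval equations `𝐀x = 𝐛` (Theorem of Shary/Rohn):
`x` is an AE solution iff `|A_c x − b_c| ≤ (A∃_Δ − A∀_Δ)|x| + b∃_Δ − b∀_Δ`. -/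
theorem ae_solution_equations_iff
    {m n : ℕ}
    (Afc Aec AfΔ AeΔ : Matrix (Fin m) (Fin n) ℝ)
    (bfc bec bfΔ beΔ : Fin m → ℝ)
    (hAfΔ : ∀ i j, 0 ≤ AfΔ i j) (hAeΔ : ∀ i j, 0 ≤ AeΔ i j)
    (hbfΔ : ∀ i, 0 ≤ bfΔ i) (hbeΔ : ∀ i, 0 ≤ beΔ i)
    (x : Fin n → ℝ) :
    (∀ Af : Matrix (Fin m) (Fin n) ℝ, (∀ i j, |Af i j - Afc i j| ≤ AfΔ i j) →
      ∀ bf : Fin m → ℝ, (∀ i, |bf i - bfc i| ≤ bfΔ i) →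
        ∃ Ae : Matrix (Fin m) (Fin n) ℝ, (∀ i j, |Ae i j - Aec i j| ≤ AeΔ i j) ∧
          ∃ be : Fin m → ℝ, (∀ i, |be i - bec i| ≤ beΔ i) ∧
            (Af + Ae).mulVec x = bf + be)
    ↔
    (∀ i, |((Afc + Aec).mulVec x) i - (bfc i + bec i)| ≤
      ((AeΔ - AfΔ).mulVec (fun j => |x j|)) i + (beΔ i - bfΔ i)) := by
  constructor
  · -- forward direction
    intro h i
    set v : Fin m → ℝ := fun i' =>
      (∑ j, Afc i' j * x j) + (∑ j, Aec i' j * x j) - (bfc i' + bec i') with hv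
    obtain ⟨Ae, hAe, be, hbe, heq⟩ :=
      h (fun i' j => Afc i' j + sg (v i') * (AfΔ i' j * sg (x j)))
        (by intro i' j
            simp only [add_sub_cancel_left, abs_mul, abs_sg, one_mul,
              abs_of_nonneg (hAfΔ i' j), mul_one]
            exact le_refl _)
        (fun i' => bfc i' - sg (v i') * bfΔ i')
        (by intro i'
            simp only [sub_sub_cancel_left, abs_neg, abs_mul, abs_sg, one_mul,
              abs_of_nonneg (hbfΔ i')]
            exact le_refl _)
    have heqi := congrFun heq i
    simp only [Matrix.add_mulVec, Pi.add_apply, Matrix.mulVec, dotProduct,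
      Matrix.add_apply, add_mul, Finset.sum_add_distrib] at heqi
    erw [Finset.sum_congr rfl fun j _ => congrArg (· * x j) (Matrix.add_apply _ _ i j)] at heqi
    simp only [add_mul, Finset.sum_add_distrib] at heqi
    have hmid : ∑ j, sg (v i) * (AfΔ i j * sg (x j)) * x j
        = sg (v i) * ∑ j, AfΔ i j * |x j| := by
      rw [Finset.mul_sum]
      refine Finset.sum_congr rfl fun j _ => ?_
      linear_combination sg (v i) * AfΔ i j * sg_mul (x j)
    have hvi : v i = (∑ j, Afc i j * x j) + (∑ j, Aec i j * x j) - (bfc i + bec i) := rfl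
    have hS : (0:ℝ) ≤ (∑ j, AfΔ i j * |x j|) + bfΔ i := by
      have : (0:ℝ) ≤ ∑ j, AfΔ i j * |x j| :=
        Finset.sum_nonneg fun j _ => mul_nonneg (hAfΔ i j) (abs_nonneg _)
      linarith [hbfΔ i]
    have key : v i + sg (v i) * ((∑ j, AfΔ i j * |x j|) + bfΔ i)
        = (be i - bec i) - ((∑ j, Ae i j * x j) - (∑ j, Aec i j * x j)) := by
      have hexp := mul_add (sg (v i)) (∑ j, AfΔ i j * |x j|) (bfΔ i)
      linarith [heqi, hmid, hvi, hexp]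
    have h1 : |v i + sg (v i) * ((∑ j, AfΔ i j * |x j|) + bfΔ i)|
        = |v i| + ((∑ j, AfΔ i j * |x j|) + bfΔ i) := abs_add_sg_mul _ _ hS
    have h2 : |(be i - bec i) - ((∑ j, Ae i j * x j) - (∑ j, Aec i j * x j))|
        ≤ beΔ i + ∑ j, AeΔ i j * |x j| := by
      have hA := abs_dev_sum_le (fun j => Ae i j) (fun j => Aec i j)
        (fun j => AeΔ i j) x (fun j => hAe i j)
      calc |(be i - bec i) - ((∑ j, Ae i j * x j) - (∑ j, Aec i j * x j))|
          ≤ |be i - bec i| + |(∑ j, Ae i j * x j) - (∑ j, Aec i j * x j)| := abs_sub _ _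
        _ ≤ beΔ i + ∑ j, AeΔ i j * |x j| := add_le_add (hbe i) hA
    rw [key] at h1
    have hgoal : |v i| ≤ (∑ j, AeΔ i j * |x j|) - (∑ j, AfΔ i j * |x j|) + (beΔ i - bfΔ i) := by
      have := h1.symm.trans_le h2; linarith
    simp only [Matrix.mulVec, dotProduct, Matrix.sub_apply, Matrix.add_apply]
    have hL : ∑ j, (Afc i j + Aec i j) * x j
        = (∑ j, Afc i j * x j) + (∑ j, Aec i j * x j) := by
      rw [← Finset.sum_add_distrib]; exact Finset.sum_congr rfl fun j _ => by ring
    have hR : ∑ j, (AeΔ i j - AfΔ i j) * |x j|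
        = (∑ j, AeΔ i j * |x j|) - (∑ j, AfΔ i j * |x j|) := by
      rw [← Finset.sum_sub_distrib]; exact Finset.sum_congr rfl fun j _ => by ring
    rw [hL, hR]
    exact hgoal
  · -- backward direction
    intro h Af hAf bf hbf
    set r : Fin m → ℝ := fun i => ∑ j, AeΔ i j * |x j| with hrdef
    have hr : ∀ i, 0 ≤ r i := fun i =>
      Finset.sum_nonneg fun j _ => mul_nonneg (hAeΔ i j) (abs_nonneg _)
    set δ : Fin m → ℝ := fun i =>
      bf i + bec i - (∑ j, Af i j * x j) - (∑ j, Aec i j * x j) with hδdef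
    set e : Fin m → ℝ := fun i => max (-(r i)) (min (δ i) (r i)) with hedef
    have he1 : ∀ i, |e i| ≤ r i := by
      intro i
      rw [abs_le]
      constructor
      · exact le_max_left _ _
      · exact max_le (by linarith [hr i]) (min_le_right _ _)
    have hδb : ∀ i, |δ i| ≤ r i + beΔ i := by
      intro i
      have hi := h i
      simp only [Matrix.mulVec, dotProduct, Matrix.sub_apply, Matrix.add_apply] at hi
      have hL : ∑ j, (Afc i j + Aec i j) * x j
          = (∑ j, Afc i j * x j) + (∑ j, Aec i j * x j) := by
        rw [← Finset.sum_add_distrib]; exact Finset.sum_congr rfl fun j _ => by ring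
      have hR : ∑ j, (AeΔ i j - AfΔ i j) * |x j|
          = (∑ j, AeΔ i j * |x j|) - (∑ j, AfΔ i j * |x j|) := by
        rw [← Finset.sum_sub_distrib]; exact Finset.sum_congr rfl fun j _ => by ring
      rw [hL, hR] at hi
      have hA := abs_dev_sum_le (fun j => Af i j) (fun j => Afc i j)
        (fun j => AfΔ i j) x (fun j => hAf i j)
      have h1 := abs_le.mp hi
      have h2 := abs_le.mp hA
      have h3 := abs_le.mp (hbf i)
      have hkey : |bf i + bec i - (∑ j, Af i j * x j) - (∑ j, Aec i j * x j)|
          ≤ (∑ j, AeΔ i j * |x j|) + beΔ i := by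
        rw [abs_le]
        constructor <;> linarith [h1.1, h1.2, h2.1, h2.2, h3.1, h3.2]
      exact hkey
    have he2 : ∀ i, |e i - δ i| ≤ beΔ i := by
      intro i
      have hd := abs_le.mp (hδb i)
      rcases le_total (δ i) (r i) with h1 | h1
      · rcases le_total (-(r i)) (δ i) with h2 | h2
        · have he : e i = δ i := by
            simp only [hedef, min_eq_left h1, max_eq_right h2]
          rw [he]; simpa using hbeΔ i
        · have he : e i = -(r i) := by
            simp only [hedef, min_eq_left h1, max_eq_left h2]
          rw [he, abs_le]; constructor <;> linarith [hd.1, hd.2, hr i]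
      · have he : e i = r i := by
          simp only [hedef, min_eq_right h1]
          exact max_eq_right (by linarith [hr i])
        rw [he, abs_le]; constructor <;> linarith [hd.1, hd.2, hr i]
    set μ : Fin m → ℝ := fun i => if r i = 0 then 0 else e i / r i with hμdef
    have hμ1 : ∀ i, |μ i| ≤ 1 := by
      intro i
      simp only [hμdef]
      split
      · simp
      · rw [abs_div, div_le_one (lt_of_le_of_ne (abs_nonneg _) (by
          intro hc; exact ‹¬ r i = 0› (by
            have := hc.symm; rwa [abs_eq_zero] at this)))]
        calc |e i| ≤ r i := he1 i
          _ ≤ |r i| := le_abs_self _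
    have hμr : ∀ i, μ i * r i = e i := by
      intro i
      simp only [hμdef]
      split
      · have h0 : |e i| ≤ 0 := by rw [← ‹r i = 0›]; exact he1 i
        have he0 : e i = 0 := abs_eq_zero.mp (le_antisymm h0 (abs_nonneg _))
        simp [he0, ‹r i = 0›]
      · exact div_mul_cancel₀ _ ‹¬ r i = 0›
    have hAex : ∀ i, ∑ j, μ i * (AeΔ i j * sg (x j)) * x j = e i := by
      intro i
      have hstep : ∑ j, μ i * (AeΔ i j * sg (x j)) * x j
          = μ i * ∑ j, AeΔ i j * |x j| := by
        rw [Finset.mul_sum]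
        refine Finset.sum_congr rfl fun j _ => ?_
        linear_combination μ i * AeΔ i j * sg_mul (x j)
      rw [hstep]; exact hμr i
    refine ⟨fun i j => Aec i j + μ i * (AeΔ i j * sg (x j)), ?_, ?_⟩
    · intro i j
      simp only [add_sub_cancel_left, abs_mul, abs_sg, mul_one,
        abs_of_nonneg (hAeΔ i j)]
      calc |μ i| * AeΔ i j ≤ 1 * AeΔ i j :=
            mul_le_mul_of_nonneg_right (hμ1 i) (hAeΔ i j)
        _ = AeΔ i j := one_mul _
    · refine ⟨fun i => (∑ j, Af i j * x j) + ((∑ j, Aec i j * x j) + e i) - bf i, ?_, ?_⟩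
      · intro i
        have hre : (∑ j, Af i j * x j) + ((∑ j, Aec i j * x j) + e i) - bf i - bec i
            = e i - δ i := by
          have hδi : δ i = bf i + bec i - (∑ j, Af i j * x j) - (∑ j, Aec i j * x j) := rfl
          rw [hδi]; ring
        rw [hre]
        exact he2 i
      · funext i
        simp only [Matrix.add_mulVec, Pi.add_apply, Matrix.mulVec, dotProduct,
          Matrix.add_apply, add_mul, Finset.sum_add_distrib]
        erw [Finset.sum_congr rfl fun j _ => congrArg (· * x j) (Matrix.add_apply _ _ i j)]
        simp only [add_mul, Finset.sum_add_distrib]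
        rw [hAex i]
        ring
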